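/- Suppose φ_n ∈ L¹([a,b],ℂ) satisfies the approximate equation K_n(φ_n) − y = φ_n. Then the vector C_n := (c_{n,1}(φ_n), …, c_{n,n}(φ_n)) of cell averages of φ_n satisfies the nonlinear system A_n N(C_n) − C_n = Y_n, i.e., for each i = 1,…,n: Σ_{j=1}^{n} A_n(i,j)·N(c_{n,j}(φ_n)) − c_{n,i}(φ_n) = Y_n(i), where A_n(i,j) := (1/h_n) ∫_{t_{n,i−1}}^{t_{n,i}} w_{n,j}(s) ds, w_{n,j}(s) := ∫_{t_{n,j−1}}^{t_{n,j}} H(s,t)[L(s,t)]_n dt, and Y_n(i) := (1/h_n) ∫_{t_{n,i−1}}^{t_{n,i}} y(s) ds. -/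

import Mathlib

open MeasureTheory Set Filter
noncomputable section

/-- the grid node `t_{n,i} := a + i·h_n` with `h_n := (b-a)/n`. -/
def tnode (a b : ℝ) (n : ℕ) (i : ℕ) : ℝ := a + i * ((b - a) / n)

/-- the cell mean `c_{n,i}(x) := (1/h_n) ∫_{t_{n,i-1}}^{t_{n,i}} x(v) dv`. -/
def cmean (a b : ℝ) (n : ℕ) (x : ℝ → ℂ) (i : ℕ) : ℂ :=
  (((b - a) / n : ℝ) : ℂ)⁻¹ * ∫ v in (tnode a b n (i - 1))..(tnode a b n i), x v

/-- a representative of the step function `π_n(x)`. -/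
def pirep (a b : ℝ) (n : ℕ) (x : ℝ → ℂ) : ℝ → ℂ := fun t =>
  ∑ i ∈ Finset.Icc 1 n, Set.indicator (Ico (tnode a b n (i - 1)) (tnode a b n i))
    (fun _ => cmean a b n x i) t

/-- the linear interpolant of `t ↦ L(s,t)` on the `i`-th cell. -/
def interpSeg (a b : ℝ) (n : ℕ) (L : ℝ → ℝ → ℂ) (i : ℕ) (s t : ℝ) : ℂ :=
  (((b - a) / n : ℝ) : ℂ)⁻¹ *
    (((tnode a b n i - t : ℝ) : ℂ) * L s (tnode a b n (i - 1)) +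
     ((t - tnode a b n (i - 1) : ℝ) : ℂ) * L s (tnode a b n i))

/-- the piecewise linear interpolant `[L(s,t)]_n` (built on the half-open cells). -/
def Lint (a b : ℝ) (n : ℕ) (L : ℝ → ℝ → ℂ) (s t : ℝ) : ℂ :=
  ∑ i ∈ Finset.Icc 1 n, Set.indicator (Ico (tnode a b n (i - 1)) (tnode a b n i))
    (fun t' => interpSeg a b n L i s t') t

/-- `w_{n,j}(s) := ∫_{t_{n,j-1}}^{t_{n,j}} H(s,t)[L(s,t)]_n dt`. -/
def wQuad (a b : ℝ) (H L : ℝ → ℝ → ℂ) (n : ℕ) (j : ℕ) (s : ℝ) : ℂ :=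
  ∫ t in (tnode a b n (j - 1))..(tnode a b n j), H s t * interpSeg a b n L j s t

/-- `A_n(i,j) := (1/h_n) ∫_{t_{n,i-1}}^{t_{n,i}} w_{n,j}(s) ds`. -/
def Amat (a b : ℝ) (H L : ℝ → ℝ → ℂ) (n : ℕ) (i j : ℕ) : ℂ :=
  (((b - a) / n : ℝ) : ℂ)⁻¹ *
    ∫ s in (tnode a b n (i - 1))..(tnode a b n i), wQuad a b H L n j s


lemma hn_pos {a b : ℝ} {n : ℕ} (hab : a < b) (hn : 1 ≤ n) : 0 < (b - a) / n :=
  div_pos (by linarith) (by exact_mod_cast hn)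

lemma tnode_mono {a b : ℝ} {n : ℕ} (hab : a < b) (hn : 1 ≤ n) {i j : ℕ} (hij : i ≤ j) :
    tnode a b n i ≤ tnode a b n j := by
  have h := hn_pos hab hn
  have hij' : (i : ℝ) ≤ j := by exact_mod_cast hij
  unfold tnode
  nlinarith

lemma tnode_zero {a b : ℝ} {n : ℕ} : tnode a b n 0 = a := by simp [tnode]

lemma tnode_last {a b : ℝ} {n : ℕ} (hn : 1 ≤ n) : tnode a b n n = b := by
  have : (n : ℝ) ≠ 0 := by positivity
  unfold tnode
  rw [mul_comm, div_mul_cancel₀ _ this]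
  ring

lemma cell_subset {a b : ℝ} {n : ℕ} (hab : a < b) (hn : 1 ≤ n) {j : ℕ}
    (hj : j ∈ Finset.Icc 1 n) :
    Icc (tnode a b n (j - 1)) (tnode a b n j) ⊆ Icc a b := by
  obtain ⟨hj1, hj2⟩ := Finset.mem_Icc.mp hj
  apply Icc_subset_Icc
  · have h := tnode_mono (a := a) (b := b) hab hn (Nat.zero_le (j - 1))
    rwa [tnode_zero] at h
  · have h := tnode_mono (a := a) (b := b) hab hn hj2
    rwa [tnode_last hn] at h

lemma cell_disjoint {a b : ℝ} {n : ℕ} (hab : a < b) (hn : 1 ≤ n) {i j : ℕ}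
    (hi : 1 ≤ i) (hj : 1 ≤ j) (hij : i ≠ j) :
    Disjoint (Ico (tnode a b n (i - 1)) (tnode a b n i))
      (Ico (tnode a b n (j - 1)) (tnode a b n j)) := by
  wlog h : i < j generalizing i j
  · exact (this hj hi hij.symm (by omega)).symm
  rw [Set.disjoint_left]
  rintro x ⟨_, hx2⟩ ⟨hx3, _⟩
  have : tnode a b n i ≤ tnode a b n (j - 1) := tnode_mono hab hn (by omega)
  linarith

lemma sum_indicator_eval {a b : ℝ} {n : ℕ} (hab : a < b) (hn : 1 ≤ n)
    {f : ℕ → ℝ → ℂ} {j : ℕ} (hj : j ∈ Finset.Icc 1 n) {t : ℝ}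
    (ht : t ∈ Ico (tnode a b n (j - 1)) (tnode a b n j)) :
    ∑ i ∈ Finset.Icc 1 n,
        Set.indicator (Ico (tnode a b n (i - 1)) (tnode a b n i)) (f i) t = f j t := by
  rw [Finset.sum_eq_single_of_mem j hj]
  · exact Set.indicator_of_mem ht _
  · intro i hi hij
    exact Set.indicator_of_notMem
      (fun ht' => Set.disjoint_left.mp
        (cell_disjoint hab hn (Finset.mem_Icc.mp hi).1 (Finset.mem_Icc.mp hj).1 hij) ht' ht) _

lemma integrand_decomp {a b : ℝ} {n : ℕ} (hab : a < b) (hn : 1 ≤ n)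
    (H L : ℝ → ℝ → ℂ) (N : ℂ → ℂ) (φn : ℝ → ℂ) (s t : ℝ) :
    H s t * Lint a b n L s t * N (pirep a b n φn t) =
      ∑ j ∈ Finset.Icc 1 n,
        Set.indicator (Ico (tnode a b n (j - 1)) (tnode a b n j))
          (fun t' => H s t' * interpSeg a b n L j s t' * N (cmean a b n φn j)) t := by
  by_cases hex : ∃ j ∈ Finset.Icc 1 n, t ∈ Ico (tnode a b n (j - 1)) (tnode a b n j)
  · obtain ⟨j, hj, ht⟩ := hex
    rw [sum_indicator_eval hab hn hj ht]
    unfold Lint pirep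
    rw [sum_indicator_eval hab hn hj ht, sum_indicator_eval hab hn hj ht]
  · push_neg at hex
    have h1 : Lint a b n L s t = 0 :=
      Finset.sum_eq_zero fun j hj => Set.indicator_of_notMem (hex j hj) _
    have h2 : ∑ j ∈ Finset.Icc 1 n,
        Set.indicator (Ico (tnode a b n (j - 1)) (tnode a b n j))
          (fun t' => H s t' * interpSeg a b n L j s t' * N (cmean a b n φn j)) t = 0 :=
      Finset.sum_eq_zero fun j hj => Set.indicator_of_notMem (hex j hj) _
    rw [h1, h2, mul_zero, zero_mul]

lemma indicator_cell_eq {a b : ℝ} {n : ℕ} (hab : a < b) (hn : 1 ≤ n)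
    (H L : ℝ → ℝ → ℂ) (N : ℂ → ℂ) (φn : ℝ → ℂ) (s : ℝ) {j : ℕ} (hj : j ∈ Finset.Icc 1 n) :
    Set.indicator (Ico (tnode a b n (j - 1)) (tnode a b n j))
        (fun t' => H s t' * interpSeg a b n L j s t' * N (cmean a b n φn j)) =
      fun t => Set.indicator (Ico (tnode a b n (j - 1)) (tnode a b n j))
        (fun t' => H s t' * Lint a b n L s t') t * N (cmean a b n φn j) := by
  funext t
  by_cases ht : t ∈ Ico (tnode a b n (j - 1)) (tnode a b n j)
  · rw [Set.indicator_of_mem ht, Set.indicator_of_mem ht]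
    unfold Lint
    rw [sum_indicator_eval hab hn hj ht]
  · rw [Set.indicator_of_notMem ht, Set.indicator_of_notMem ht, zero_mul]

lemma integral_decomp {a b : ℝ} {n : ℕ} (hab : a < b) (hn : 1 ≤ n)
    (H L : ℝ → ℝ → ℂ) (N : ℂ → ℂ) (φn : ℝ → ℂ) {s : ℝ}
    (hints : IntegrableOn (fun t => H s t * Lint a b n L s t) (Icc a b)) :
    (∫ t in Icc a b, H s t * Lint a b n L s t * N (pirep a b n φn t)) =
      ∑ j ∈ Finset.Icc 1 n, wQuad a b H L n j s * N (cmean a b n φn j) := by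
  simp only [integrand_decomp hab hn H L N φn s]
  rw [integral_finset_sum]
  · refine Finset.sum_congr rfl fun j hj => ?_
    rw [indicator_cell_eq hab hn H L N φn s hj]
    rw [MeasureTheory.integral_mul_const]
    congr 1
    rw [MeasureTheory.integral_indicator measurableSet_Ico,
      Measure.restrict_restrict measurableSet_Ico,
      Set.inter_eq_self_of_subset_left
        ((Set.Ico_subset_Icc_self).trans (cell_subset hab hn hj))]
    have hle : tnode a b n (j - 1) ≤ tnode a b n j :=
      tnode_mono hab hn (Nat.sub_le j 1)
    have hcong : (∫ x in Ico (tnode a b n (j - 1)) (tnode a b n j), H s x * Lint a b n L s x)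
        = ∫ x in Ico (tnode a b n (j - 1)) (tnode a b n j), H s x * interpSeg a b n L j s x := by
      apply setIntegral_congr_fun measurableSet_Ico
      intro t ht
      simp only [Lint]
      rw [sum_indicator_eval hab hn hj ht]
    rw [hcong, integral_Ico_eq_integral_Ioo, wQuad, intervalIntegral.integral_of_le hle,
      integral_Ioc_eq_integral_Ioo]
  · intro j hj
    rw [indicator_cell_eq hab hn H L N φn s hj]
    exact (hints.indicator measurableSet_Ico).mul_const _

/-- If `φ_n` satisfies the approximate equation `K_n(φ_n) - y = φ_n` (a.e. on `[a,b]`), then its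
vector of cell means satisfies the nonlinear system `A_n N(C_n) - C_n = Y_n`:
for each `i = 1,…,n`, `Σ_j A_n(i,j) N(c_{n,j}(φ_n)) - c_{n,i}(φ_n) = Y_n(i)`. -/
theorem approximate_solution_nonlinear_system (a b : ℝ) (hab : a < b)
    (H : ℝ → ℝ → ℂ) (hH : Measurable (Function.uncurry H))
    (L : ℝ → ℝ → ℂ)
    (hL : ContinuousOn (fun p : ℝ × ℝ => L p.1 p.2) (Icc a b ×ˢ Icc a b))
    (N : ℂ → ℂ) (y : ℝ → ℂ) (hy : IntegrableOn y (Icc a b))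
    (n : ℕ) (hn : 1 ≤ n)
    (φn : ℝ → ℂ) (hφn : IntegrableOn φn (Icc a b))
    -- Fubini-type integrability hypotheses
    (hint : ∀ s ∈ Icc a b, IntegrableOn (fun t => H s t * Lint a b n L s t) (Icc a b))
    (hw : ∀ j ∈ Finset.Icc 1 n, IntegrableOn (wQuad a b H L n j) (Icc a b))
    -- `φ_n` satisfies `K_n(φ_n) - y = φ_n` (a.e. on `[a,b]`)
    (happrox : ∀ᵐ s ∂(volume.restrict (Icc a b)),
      (∫ t in Icc a b, H s t * Lint a b n L s t * N (pirep a b n φn t)) - y s = φn s) :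
    ∀ i ∈ Finset.Icc 1 n,
      (∑ j ∈ Finset.Icc 1 n, Amat a b H L n i j * N (cmean a b n φn j))
          - cmean a b n φn i
        = (((b - a) / n : ℝ) : ℂ)⁻¹ *
            ∫ s in (tnode a b n (i - 1))..(tnode a b n i), y s := by
  
  intro i hi
  have hsub : Icc (tnode a b n (i - 1)) (tnode a b n i) ⊆ Icc a b := cell_subset hab hn hi
  have hle : tnode a b n (i - 1) ≤ tnode a b n i := tnode_mono hab hn (Nat.sub_le i 1)
  -- a.e. identity on [a,b]
  have key : ∀ᵐ s ∂(volume.restrict (Icc a b)),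
      φn s = (∑ j ∈ Finset.Icc 1 n, wQuad a b H L n j s * N (cmean a b n φn j)) - y s := by
    filter_upwards [happrox, ae_restrict_mem measurableSet_Icc] with s hs hsmem
    rw [← hs, integral_decomp hab hn H L N φn (hint s hsmem)]
  have key' : ∀ᵐ s ∂(volume.restrict (Icc (tnode a b n (i - 1)) (tnode a b n i))),
      φn s = (∑ j ∈ Finset.Icc 1 n, wQuad a b H L n j s * N (cmean a b n φn j)) - y s :=
    ae_restrict_of_ae_restrict_of_subset hsub key
  -- integrate over the i-th cell
  have hwint : ∀ j ∈ Finset.Icc 1 n,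
      IntegrableOn (fun s => wQuad a b H L n j s * N (cmean a b n φn j))
        (Icc (tnode a b n (i - 1)) (tnode a b n i)) :=
    fun j hj => ((hw j hj).mono_set hsub).mul_const _
  have hyint : IntegrableOn y (Icc (tnode a b n (i - 1)) (tnode a b n i)) :=
    hy.mono_set hsub
  have hΦ : (∫ s in Icc (tnode a b n (i - 1)) (tnode a b n i), φn s)
      = (∑ j ∈ Finset.Icc 1 n,
          (∫ s in Icc (tnode a b n (i - 1)) (tnode a b n i), wQuad a b H L n j s)
            * N (cmean a b n φn j))
        - ∫ s in Icc (tnode a b n (i - 1)) (tnode a b n i), y s := by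
    rw [integral_congr_ae key', integral_sub (integrable_finset_sum _ hwint) hyint,
      integral_finset_sum _ hwint]
    congr 1
    exact Finset.sum_congr rfl fun j hj => MeasureTheory.integral_mul_const _ _
  -- rewrite interval integrals as integrals over Icc
  have hIcc : ∀ f : ℝ → ℂ,
      (∫ s in (tnode a b n (i - 1))..(tnode a b n i), f s)
        = ∫ s in Icc (tnode a b n (i - 1)) (tnode a b n i), f s := by
    intro f
    rw [intervalIntegral.integral_of_le hle, integral_Icc_eq_integral_Ioc]
  have hc : cmean a b n φn i = (((b - a) / n : ℝ) : ℂ)⁻¹ *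
      ∫ s in Icc (tnode a b n (i - 1)) (tnode a b n i), φn s := by
    rw [cmean, hIcc]
  simp only [Amat, hIcc]
  rw [hc, hΦ]
  have hfac : (∑ j ∈ Finset.Icc 1 n, (((b - a) / n : ℝ) : ℂ)⁻¹ *
        (∫ s in Icc (tnode a b n (i - 1)) (tnode a b n i), wQuad a b H L n j s) *
        N (cmean a b n φn j))
      = (((b - a) / n : ℝ) : ℂ)⁻¹ * ∑ j ∈ Finset.Icc 1 n,
        (∫ s in Icc (tnode a b n (i - 1)) (tnode a b n i), wQuad a b H L n j s) *
        N (cmean a b n φn j) := by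
    rw [Finset.mul_sum]
    exact Finset.sum_congr rfl fun j _ => mul_assoc _ _ _
  rw [hfac]
  ring
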